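/- Let f : ℝⁿ → ℝ be continuously differentiable with L_f-Lipschitz gradient and φ proper convex lsc. Fix x ∈ dom φ, d, v, v₊ ∈ ℝⁿ, scalars α, β, ρ > 0, and step sizes λ, λ₊ > 0. Set F^λ_v(x) := x − prox_{λφ}(x − λv), p^λ_v(x) := prox_{λφ}(x − λv), p^λ(x) := prox_{λφ}(x − λ∇f(x)), F^λ(x) := x − p^λ(x), and p₊ := prox_{λ₊φ}(x + αd − λ₊v₊). Then with ψ = f + φ and ℓ(λ₊,α,β) := λ₊(α/λ₊ + L_f β)², 2[ψ(p₊) − ψ(x)] ≤ (1/ρ)‖∇f(x) − v‖² + λ₊‖∇f(x+βd) − v₊‖² + (1/λ₊ − 1/λ)‖F^λ_v(x)‖² + (L_f − 1/λ₊)‖p₊ − x‖² + (ρ − 1/λ)‖p^λ_v(x) − p^λ(x)‖² + ℓ(λ₊,α,β)‖d‖² − (1/λ)‖F^λ(x)‖² + 2⟨∇f(x+βd) − v₊, λ₊(∇f(x) − ∇f(x+βd)) + αd⟩. -/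

import Mathlib

open scoped RealInnerProductSpace

/-- `p` is the proximal point `prox_{λφ}(x)`. -/
def IsProx {n : ℕ} (φ : EuclideanSpace ℝ (Fin n) → ℝ) (lam : ℝ)
    (x p : EuclideanSpace ℝ (Fin n)) : Prop :=
  ∀ y, φ p + (1 / (2 * lam)) * ‖x - p‖ ^ 2 ≤ φ y + (1 / (2 * lam)) * ‖x - y‖ ^ 2

private lemma le_of_forall_pos' {a b : ℝ} (h : ∀ ε > (0:ℝ), a ≤ b + ε) : a ≤ b := by
  by_contra hc
  push_neg at hc
  have := h ((a - b)/2) (by linarith)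
  linarith

private lemma prox_subgrad {n : ℕ} {φ : EuclideanSpace ℝ (Fin n) → ℝ}
    (hconv : ConvexOn ℝ Set.univ φ) {lam : ℝ} (hlam : 0 < lam)
    {u p : EuclideanSpace ℝ (Fin n)} (hp : IsProx φ lam u p)
    (y : EuclideanSpace ℝ (Fin n)) :
    φ p + (1/lam) * ⟪u - p, y - p⟫ ≤ φ y := by
  apply le_of_forall_pos'
  intro ε hε
  have hD0 : (0:ℝ) ≤ (1/(2*lam)) * ‖y - p‖^2 := by positivity
  set t : ℝ := min 1 (ε / ((1/(2*lam)) * ‖y - p‖^2 + 1)) with htdef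
  have ht0 : 0 < t := lt_min one_pos (div_pos hε (by linarith))
  have ht1 : t ≤ 1 := min_le_left _ _
  have hpt : p + t • (y - p) = (1-t) • p + t • y := by module
  have hcv : φ (p + t • (y - p)) ≤ (1-t) * φ p + t * φ y := by
    rw [hpt]
    have := hconv.2 (Set.mem_univ p) (Set.mem_univ y) (by linarith : (0:ℝ) ≤ 1 - t)
      ht0.le (by ring : (1-t) + t = 1)
    simpa [smul_eq_mul] using this
  have hexp : ‖u - (p + t • (y - p))‖^2
      = ‖u - p‖^2 - 2*t*⟪u - p, y - p⟫ + t^2 * ‖y - p‖^2 := by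
    have h1 : u - (p + t • (y - p)) = (u - p) - t • (y - p) := by module
    rw [h1, norm_sub_sq_real, real_inner_smul_right, norm_smul]
    simp [mul_pow, sq_abs, Real.norm_eq_abs]
    ring
  have h7 := hp (p + t • (y - p))
  rw [hexp] at h7
  have h8 : t * (φ p + 2*(1/(2*lam)) * ⟪u - p, y - p⟫)
      ≤ t * (φ y + ((1/(2*lam)) * ‖y - p‖^2) * t) := by nlinarith [h7, hcv]
  have h9 : φ p + 2*(1/(2*lam)) * ⟪u - p, y - p⟫
      ≤ φ y + ((1/(2*lam)) * ‖y - p‖^2) * t := le_of_mul_le_mul_left h8 ht0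
  have hpos : (0:ℝ) < (1/(2*lam)) * ‖y - p‖^2 + 1 := by linarith
  have htR : t ≤ ε / ((1/(2*lam)) * ‖y - p‖^2 + 1) := min_le_right _ _
  have h10 : ((1/(2*lam)) * ‖y - p‖^2) * t ≤ ε := by
    have h11 := mul_le_mul_of_nonneg_left htR hD0
    have h12 : ((1/(2*lam)) * ‖y - p‖^2) * (ε / ((1/(2*lam)) * ‖y - p‖^2 + 1)) ≤ ε := by
      rw [mul_div_assoc', div_le_iff₀ hpos]
      nlinarith
    linarith
  have h2c : 2*(1/(2*lam)) = 1/lam := by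
    field_simp
  rw [← h2c]
  linarith

private lemma descent_lemma {n : ℕ}
    (f : EuclideanSpace ℝ (Fin n) → ℝ)
    (f' : EuclideanSpace ℝ (Fin n) → EuclideanSpace ℝ (Fin n)) (Lf : ℝ)
    (hf : ∀ x, HasGradientAt f (f' x) x)
    (hLip : ∀ x y, ‖f' x - f' y‖ ≤ Lf * ‖x - y‖)
    (x y : EuclideanSpace ℝ (Fin n)) :
    f y ≤ f x + ⟪f' x, y - x⟫ + Lf / 2 * ‖y - x‖ ^ 2 := by
  set u := y - x with hu
  have hcf' : Continuous f' := by
    have hl : LipschitzWith (Real.toNNReal Lf) f' := by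
      apply LipschitzWith.of_dist_le_mul
      intro a b
      rw [dist_eq_norm, dist_eq_norm]
      calc ‖f' a - f' b‖ ≤ Lf * ‖a - b‖ := hLip a b
        _ ≤ Real.toNNReal Lf * ‖a - b‖ :=
            mul_le_mul_of_nonneg_right (Real.le_coe_toNNReal Lf) (norm_nonneg _)
    exact hl.continuous
  have hline : ∀ t : ℝ, HasDerivAt (fun s : ℝ => f (x + s • u)) ⟪f' (x + t • u), u⟫ t := by
    intro t
    have hγ : HasDerivAt (fun s : ℝ => x + s • u) u t := by
      simpa using ((hasDerivAt_id t).smul_const u).const_add x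
    have h := (hf (x + t • u)).hasFDerivAt.comp_hasDerivAt t hγ
    simpa [InnerProductSpace.toDual_apply_apply, Function.comp_def] using h
  have hcont : Continuous fun t : ℝ => ⟪f' (x + t • u), u⟫ := by
    apply Continuous.inner _ continuous_const
    exact hcf'.comp (continuous_const.add (continuous_id.smul continuous_const))
  have hI : ∫ t in (0:ℝ)..1, ⟪f' (x + t • u), u⟫ = f (x + (1:ℝ) • u) - f (x + (0:ℝ) • u) :=
    intervalIntegral.integral_eq_sub_of_hasDerivAt (fun t _ => hline t)
      (hcont.intervalIntegrable 0 1)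
  have hint2 : IntervalIntegrable (fun t : ℝ => ⟪f' x, u⟫ + Lf * ‖u‖^2 * t) MeasureTheory.volume 0 1 :=
    (continuous_const.add (continuous_const.mul continuous_id)).intervalIntegrable 0 1
  have hmono : ∫ t in (0:ℝ)..1, ⟪f' (x + t • u), u⟫
      ≤ ∫ t in (0:ℝ)..1, (⟪f' x, u⟫ + Lf * ‖u‖^2 * t) := by
    apply intervalIntegral.integral_mono_on (by norm_num) (hcont.intervalIntegrable 0 1) hint2
    intro t ht
    have ht0 : 0 ≤ t := ht.1
    have h1 : ⟪f' (x + t • u) - f' x, u⟫ ≤ ‖f' (x + t • u) - f' x‖ * ‖u‖ :=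
      real_inner_le_norm _ _
    have h2 : ‖f' (x + t • u) - f' x‖ ≤ Lf * (t * ‖u‖) := by
      have h := hLip (x + t • u) x
      have he : x + t • u - x = t • u := by module
      rw [he, norm_smul, Real.norm_eq_abs, abs_of_nonneg ht0] at h
      exact h
    have h3 : ⟪f' (x + t • u), u⟫ = ⟪f' x, u⟫ + ⟪f' (x + t • u) - f' x, u⟫ := by
      rw [inner_sub_left]; ring
    have h4 : ‖f' (x + t • u) - f' x‖ * ‖u‖ ≤ (Lf * (t * ‖u‖)) * ‖u‖ :=
      mul_le_mul_of_nonneg_right h2 (norm_nonneg _)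
    rw [h3]
    have : (Lf * (t * ‖u‖)) * ‖u‖ = Lf * ‖u‖^2 * t := by ring
    linarith [h1, h4, this.le, this.ge]
  have hIg : ∫ t in (0:ℝ)..1, (⟪f' x, u⟫ + Lf * ‖u‖^2 * t)
      = ⟪f' x, u⟫ + Lf * ‖u‖^2 * (1/2) := by
    rw [intervalIntegral.integral_add (intervalIntegrable_const)
      (Continuous.intervalIntegrable (by continuity : Continuous fun t : ℝ => Lf * ‖u‖^2 * t) 0 1),
      intervalIntegral.integral_const, intervalIntegral.integral_const_mul,
      integral_id]
    norm_num
  have hy1 : x + (1:ℝ) • u = y := by rw [hu]; module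
  have hy0 : x + (0:ℝ) • u = x := by rw [hu]; module
  rw [hy1, hy0] at hI
  have : f y - f x ≤ ⟪f' x, u⟫ + Lf * ‖u‖^2 * (1/2) := by
    rw [← hI, ← hIg] at *
    linarith [hmono]
  rw [hu] at this ⊢
  linarith

set_option maxHeartbeats 4000000 in
/-- Key deterministic descent estimate (Lemma 2.1). Here
`pv = prox_{λφ}(x − λv)` so `F^λ_v(x) = x − pv`, `pf = prox_{λφ}(x − λ∇f(x))`
so `F^λ(x) = x − pf`, and `p₊ = prox_{λ₊φ}(x + αd − λ₊v₊)`, with `ψ = f + φ`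
and `ℓ(λ₊,α,β) = λ₊(α/λ₊ + L_fβ)²`. -/
theorem extra_step_descent {n : ℕ}
    (f : EuclideanSpace ℝ (Fin n) → ℝ)
    (f' : EuclideanSpace ℝ (Fin n) → EuclideanSpace ℝ (Fin n))
    (φ : EuclideanSpace ℝ (Fin n) → ℝ) (Lf : ℝ)
    (hf : ∀ x, HasGradientAt f (f' x) x)
    (hLip : ∀ x y, ‖f' x - f' y‖ ≤ Lf * ‖x - y‖)
    (hconv : ConvexOn ℝ Set.univ φ) (hlsc : LowerSemicontinuous φ)
    (x d v vp : EuclideanSpace ℝ (Fin n))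
    (α β ρ lam lamp : ℝ)
    (hα : 0 < α) (hβ : 0 < β) (hρ : 0 < ρ) (hlam : 0 < lam) (hlamp : 0 < lamp)
    (pv pf pp : EuclideanSpace ℝ (Fin n))
    (hpv : IsProx φ lam (x - lam • v) pv)
    (hpf : IsProx φ lam (x - lam • f' x) pf)
    (hpp : IsProx φ lamp (x + α • d - lamp • vp) pp) :
    2 * ((f pp + φ pp) - (f x + φ x)) ≤
      (1 / ρ) * ‖f' x - v‖ ^ 2
      + lamp * ‖f' (x + β • d) - vp‖ ^ 2
      + (1 / lamp - 1 / lam) * ‖x - pv‖ ^ 2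
      + (Lf - 1 / lamp) * ‖pp - x‖ ^ 2
      + (ρ - 1 / lam) * ‖pv - pf‖ ^ 2
      + (lamp * (α / lamp + Lf * β) ^ 2) * ‖d‖ ^ 2
      - (1 / lam) * ‖x - pf‖ ^ 2
      + 2 * ⟪f' (x + β • d) - vp, lamp • (f' x - f' (x + β • d)) + α • d⟫ := by

  have hA := prox_subgrad hconv hlamp hpp pv
  have hB := prox_subgrad hconv hlam hpv pf
  have hC := prox_subgrad hconv hlam hpf x
  have hD := descent_lemma f f' Lf hf hLip x pp
  have hlipd : ‖f' x - f' (x + β • d)‖ ≤ Lf * β * ‖d‖ := by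
    have h := hLip x (x + β • d)
    have he : x - (x + β • d) = (-β) • d := by module
    rw [he, norm_smul, Real.norm_eq_abs, abs_neg, abs_of_pos hβ] at h
    linarith [h]
  have h2 : ‖(f' x - f' (x + β • d)) + (α/lamp) • d‖ ≤ (α/lamp + Lf * β) * ‖d‖ := by
    calc ‖(f' x - f' (x + β • d)) + (α/lamp) • d‖
        ≤ ‖f' x - f' (x + β • d)‖ + ‖(α/lamp) • d‖ := norm_add_le _ _
      _ ≤ Lf * β * ‖d‖ + (α/lamp) * ‖d‖ := by
          rw [norm_smul, Real.norm_eq_abs, abs_of_pos (div_pos hα hlamp)]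
          linarith [hlipd]
      _ = (α/lamp + Lf * β) * ‖d‖ := by ring
  have hq : ‖(f' x - f' (x + β • d)) + (α/lamp) • d‖^2 ≤ (α/lamp + Lf * β)^2 * ‖d‖^2 := by
    calc ‖(f' x - f' (x + β • d)) + (α/lamp) • d‖^2
        ≤ ((α/lamp + Lf * β) * ‖d‖)^2 := pow_le_pow_left₀ (norm_nonneg _) h2 2
      _ = (α/lamp + Lf * β)^2 * ‖d‖^2 := by ring
  have hn1 : (0:ℝ) ≤ (1/lamp) * ‖(pp - pv) - lamp • (f' x - vp + (α/lamp) • d)‖^2 :=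
    mul_nonneg (one_div_pos.mpr hlamp).le (sq_nonneg _)
  have hn2 : (0:ℝ) ≤ (1/ρ) * ‖ρ • (pv - pf) - (f' x - v)‖^2 :=
    mul_nonneg (one_div_pos.mpr hρ).le (sq_nonneg _)
  have hn3 : (0:ℝ) ≤ lamp * ((α/lamp + Lf * β)^2 * ‖d‖^2
      - ‖(f' x - f' (x + β • d)) + (α/lamp) • d‖^2) :=
    mul_nonneg hlamp.le (by linarith [hq])
  have E : (1 / ρ) * ‖f' x - v‖ ^ 2
      + lamp * ‖f' (x + β • d) - vp‖ ^ 2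
      + (1 / lamp - 1 / lam) * ‖x - pv‖ ^ 2
      + (Lf - 1 / lamp) * ‖pp - x‖ ^ 2
      + (ρ - 1 / lam) * ‖pv - pf‖ ^ 2
      + (lamp * (α / lamp + Lf * β) ^ 2) * ‖d‖ ^ 2
      - (1 / lam) * ‖x - pf‖ ^ 2
      + 2 * ⟪f' (x + β • d) - vp, lamp • (f' x - f' (x + β • d)) + α • d⟫
      = 2 * ((⟪f' x, pp - x⟫ + Lf / 2 * ‖pp - x‖ ^ 2)
          - ((1/lamp) * ⟪(x + α • d - lamp • vp) - pp, pv - pp⟫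
            + (1/lam) * ⟪(x - lam • v) - pv, pf - pv⟫
            + (1/lam) * ⟪(x - lam • f' x) - pf, x - pf⟫))
        + (1/lamp) * ‖(pp - pv) - lamp • (f' x - vp + (α/lamp) • d)‖^2
        + (1/ρ) * ‖ρ • (pv - pf) - (f' x - v)‖^2
        + lamp * ((α/lamp + Lf * β)^2 * ‖d‖^2
            - ‖(f' x - f' (x + β • d)) + (α/lamp) • d‖^2) := by
    simp only [← real_inner_self_eq_norm_sq]
    simp only [inner_sub_left, inner_sub_right, inner_add_left, inner_add_right,
      real_inner_smul_left, real_inner_smul_right]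
    simp only [real_inner_comm]
    field_simp
    ring
  linarith [hA, hB, hC, hD, hn1, hn2, hn3, E]
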